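/- Let G₁ and G₂ be nontrivial finite groups and let φ : G₁ * G₂ → G₁ × G₂ be the canonical homomorphism from the free product to the direct product (restricting to the identity on each factor). Then the kernel of φ is generated by the commutators [g₁,g₂] = g₁g₂g₁⁻¹g₂⁻¹ with g₁ ∈ G₁ \ {1} and g₂ ∈ G₂ \ {1}, and this kernel is a free group of rank (|G₁|−1)(|G₂|−1). In particular there is an exact sequence 1 → [G₁,G₂] → G₁ * G₂ → G₁ × G₂ → 1 with [G₁,G₂] free of rank (|G₁|−1)(|G₂|−1). -/

import Mathlib

set_option maxHeartbeats 1000000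
set_option linter.unusedSectionVars false
open scoped commutatorElement
section
open Monoid Subgroup

namespace KCPaux



variable {G₁ : Type*} {G₂ : Type*} [Group G₁] [Group G₂]

/-- The basic commutator. -/
def E (a : G₁) (b : G₂) : Coprod G₁ G₂ := ⁅(Coprod.inl a : Coprod G₁ G₂), Coprod.inr b⁆

/-- the generating set from the statement -/
def genSet (G₁ G₂ : Type*) [Group G₁] [Group G₂] : Set (Coprod G₁ G₂) :=
  {x : Monoid.Coprod G₁ G₂ | ∃ g₁ : G₁, ∃ g₂ : G₂, g₁ ≠ 1 ∧ g₂ ≠ 1 ∧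
          x = ⁅(Monoid.Coprod.inl g₁ : Monoid.Coprod G₁ G₂), Monoid.Coprod.inr g₂⁆}

lemma E_one_left (b : G₂) : E (1 : G₁) b = 1 := by simp [E]

lemma E_one_right (a : G₁) : E a (1 : G₂) = 1 := by simp [E]

lemma E_mem (a : G₁) (b : G₂) : E a b ∈ closure (genSet G₁ G₂) := by
  by_cases ha : a = 1
  · rw [ha, E_one_left]; exact one_mem _
  by_cases hb : b = 1
  · rw [hb, E_one_right]; exact one_mem _
  exact subset_closure ⟨a, b, ha, hb, rfl⟩

lemma conj_inl (g a : G₁) (b : G₂) :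
    Coprod.inl g * E a b * (Coprod.inl g : Coprod G₁ G₂)⁻¹ = E (g * a) b * (E g b)⁻¹ := by
  simp only [E, commutatorElement_def, map_mul, map_inv]
  group

lemma conj_inr (h : G₂) (a : G₁) (b : G₂) :
    Coprod.inr h * E a b * (Coprod.inr h : Coprod G₁ G₂)⁻¹ = (E a h)⁻¹ * E a (h * b) := by
  simp only [E, commutatorElement_def, map_mul, map_inv]
  group

lemma conj_mem_of_forall_gen {x : Coprod G₁ G₂}
    (hx : ∀ a : G₁, ∀ b : G₂, x * E a b * x⁻¹ ∈ closure (genSet G₁ G₂)) :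
    ∀ h ∈ closure (genSet G₁ G₂), x * h * x⁻¹ ∈ closure (genSet G₁ G₂) := by
  intro h hh
  induction hh using closure_induction with
  | mem y hy =>
    obtain ⟨a, b, _, _, rfl⟩ := hy
    exact hx a b
  | one => simpa using one_mem _
  | mul y z _ _ hy hz =>
    have : x * (y * z) * x⁻¹ = (x * y * x⁻¹) * (x * z * x⁻¹) := by group
    rw [this]; exact mul_mem hy hz
  | inv y _ hy =>
    have : x * y⁻¹ * x⁻¹ = (x * y * x⁻¹)⁻¹ := by group
    rw [this]; exact inv_mem hy

lemma normal_closure_genSet : (closure (genSet G₁ G₂)).Normal := by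
  constructor
  intro n hn g
  -- prove by induction on g that conjugation preserves the closure, in both directions
  have key : ∀ x : Coprod G₁ G₂,
      (∀ h ∈ closure (genSet G₁ G₂), x * h * x⁻¹ ∈ closure (genSet G₁ G₂)) ∧
      (∀ h ∈ closure (genSet G₁ G₂), x⁻¹ * h * x ∈ closure (genSet G₁ G₂)) := by
    intro x
    induction x using Coprod.induction_on with
    | inl m =>
      constructor
      · refine conj_mem_of_forall_gen fun a b => ?_
        rw [conj_inl]
        exact mul_mem (E_mem _ _) (inv_mem (E_mem _ _))
      · intro h hh
        have := conj_mem_of_forall_gen (x := (Coprod.inl m⁻¹ : Coprod G₁ G₂))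
          (fun a b => by rw [conj_inl]; exact mul_mem (E_mem _ _) (inv_mem (E_mem _ _)))
          h hh
        simpa using this
    | inr m =>
      constructor
      · refine conj_mem_of_forall_gen fun a b => ?_
        rw [conj_inr]
        exact mul_mem (inv_mem (E_mem _ _)) (E_mem _ _)
      · intro h hh
        have := conj_mem_of_forall_gen (x := (Coprod.inr m⁻¹ : Coprod G₁ G₂))
          (fun a b => by rw [conj_inr]; exact mul_mem (inv_mem (E_mem _ _)) (E_mem _ _))
          h hh
        simpa using this
    | mul x y hx hy =>
      constructor
      · intro h hh
        have : x * y * h * (x * y)⁻¹ = x * (y * h * y⁻¹) * x⁻¹ := by group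
        rw [this]
        exact hx.1 _ (hy.1 h hh)
      · intro h hh
        have : (x * y)⁻¹ * h * (x * y) = y⁻¹ * (x⁻¹ * h * x) * y := by group
        rw [this]
        exact hy.2 _ (hx.2 h hh)
  exact (key g).1 n hn

lemma ker_toProd_eq :
    (Coprod.toProd : Coprod G₁ G₂ →* G₁ × G₂).ker = closure (genSet G₁ G₂) := by
  haveI := normal_closure_genSet (G₁ := G₁) (G₂ := G₂)
  apply le_antisymm
  · -- the quotient argument
    set H := closure (genSet G₁ G₂)
    set π := QuotientGroup.mk' H
    have comm : ∀ (m : G₁) (n : G₂),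
        Commute (π (Coprod.inl m)) (π (Coprod.inr n)) := by
      intro m n
      have : ⁅π (Coprod.inl m), π (Coprod.inr n)⁆ = 1 := by
        rw [show ⁅π (Coprod.inl m), π (Coprod.inr n)⁆ = π (E m n) by
          simp [E, commutatorElement_def, map_mul, map_inv], ← MonoidHom.mem_ker,
          QuotientGroup.ker_mk']
        exact E_mem m n
      exact commutatorElement_eq_one_iff_commute.mp this
    set s : G₁ × G₂ →* Coprod G₁ G₂ ⧸ H :=
      MonoidHom.noncommCoprod (π.comp Coprod.inl) (π.comp Coprod.inr) comm
    have hs : s.comp (Coprod.toProd) = π := by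
      apply Coprod.hom_ext <;> ext x <;>
        simp [s, Coprod.toProd_apply_inl, Coprod.toProd_apply_inr,
          MonoidHom.noncommCoprod_apply]
    intro x hx
    have : π x = 1 := by
      rw [← hs]
      simp only [MonoidHom.comp_apply]
      rw [MonoidHom.mem_ker.mp hx, map_one]
    rwa [← QuotientGroup.ker_mk' H, MonoidHom.mem_ker]
  · rw [closure_le]
    rintro x ⟨a, b, _, _, rfl⟩
    simp [MonoidHom.mem_ker, commutatorElement_def, Coprod.toProd_apply_inl,
      Coprod.toProd_apply_inr, Prod.ext_iff, mul_assoc]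




section PingPong

open Monoid.CoprodI Cardinal Pointwise

variable {ι : Type*} [hι : Nonempty ι]
variable {G : Type*} [Group G] (a : ι → G)
variable {α : Type*} [MulAction G α]
variable (X Y : ι → Set α)

/-- Ping-pong for powers of a single element. -/
theorem zpow_ne_one_of_ping_pong {X Y : Set α} {x : G} (p : α)
    (hpX : p ∉ X) (hpY : p ∉ Y) (hXY : Disjoint X Y)
    (hX : x • Yᶜ ⊆ X) (hY : x⁻¹ • Xᶜ ⊆ Y) {n : ℤ} (hn : n ≠ 0) : x ^ n ≠ 1 := by
  have hpos : ∀ m : ℤ, 1 ≤ m → x ^ m • Yᶜ ⊆ X := by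
    intro m hm
    refine Int.le_induction (motive := fun m _ => x ^ m • Yᶜ ⊆ X) ?_ ?_ m hm
    · simpa using hX
    · intro m _ hi
      calc x ^ (m + 1) • Yᶜ = (x ^ m * x) • Yᶜ := by rw [zpow_add, zpow_one]
        _ = x ^ m • x • Yᶜ := mul_smul _ _ _
        _ ⊆ x ^ m • X := Set.smul_set_mono hX
        _ ⊆ x ^ m • Yᶜ := Set.smul_set_mono hXY.subset_compl_right
        _ ⊆ X := hi
  have hneg : ∀ m : ℤ, m ≤ -1 → x ^ m • Xᶜ ⊆ Y := by
    intro m hm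
    refine Int.le_induction_down (motive := fun m _ => x ^ m • Xᶜ ⊆ Y) ?_ ?_ m hm
    · simpa using hY
    · intro m _ hi
      calc x ^ (m - 1) • Xᶜ = (x ^ m * x⁻¹) • Xᶜ := by rw [zpow_sub, zpow_one]
        _ = x ^ m • x⁻¹ • Xᶜ := mul_smul _ _ _
        _ ⊆ x ^ m • Y := Set.smul_set_mono hY
        _ ⊆ x ^ m • Xᶜ := Set.smul_set_mono hXY.symm.subset_compl_right
        _ ⊆ Y := hi
  intro heq
  rcases lt_or_gt_of_ne hn with hlt | hgt
  · have : p ∈ Y := hneg n (Int.le_of_lt_add_one (by simpa using hlt))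
      ⟨p, hpX, by simp [heq]⟩
    exact hpY this
  · have : p ∈ X := hpos n hgt ⟨p, hpY, by simp [heq]⟩
    exact hpX this

theorem freeGroup_lift_injective_of_ping_pong_nontrivial [Nontrivial ι]
    (hXnonempty : ∀ i, (X i).Nonempty)
    (hXdisj : Pairwise (Function.onFun Disjoint X))
    (hYdisj : Pairwise (Function.onFun Disjoint Y))
    (hXYdisj : ∀ i j, Disjoint (X i) (Y j))
    (hX : ∀ i, a i • (Y i)ᶜ ⊆ X i)
    (hY : ∀ i, a⁻¹ i • (X i)ᶜ ⊆ Y i) :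
    Function.Injective (FreeGroup.lift a) := by
  have : FreeGroup.lift a =
      (CoprodI.lift fun i => FreeGroup.lift fun _ => a i).comp
        (@freeGroupEquivCoprodI ι).toMonoidHom := by
    ext i
    simp
  rw [this, MonoidHom.coe_comp]
  clear this
  refine Function.Injective.comp ?_ (MulEquiv.injective freeGroupEquivCoprodI)
  -- Step two: Invoke the ping-pong lemma for free products
  show Function.Injective (CoprodI.lift fun i : ι => FreeGroup.lift fun _ => a i)
  -- Prepare to instantiate lift_injective_of_ping_pong
  let H : ι → Type _ := fun _i => FreeGroup Unit
  let f : ∀ i, H i →* G := fun i => FreeGroup.lift fun _ => a i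
  let X' : ι → Set α := fun i => X i ∪ Y i
  apply lift_injective_of_ping_pong f _ X'
  · show ∀ i, (X' i).Nonempty
    exact fun i => Set.Nonempty.inl (hXnonempty i)
  · show Pairwise (Function.onFun Disjoint X')
    intro i j hij
    simp only [X']
    apply Disjoint.union_left <;> apply Disjoint.union_right
    · exact hXdisj hij
    · exact hXYdisj i j
    · exact (hXYdisj j i).symm
    · exact hYdisj hij
  · show Pairwise fun i j => ∀ h : H i, h ≠ 1 → f i h • X' j ⊆ X' i
    rintro i j hij
    -- use free_group unit ≃ ℤ
    refine FreeGroup.freeGroupUnitEquivInt.forall_congr_left.mpr ?_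
    intro n hne1
    change FreeGroup.lift (fun _ => a i) (FreeGroup.of () ^ n) • X' j ⊆ X' i
    simp only [map_zpow, FreeGroup.lift_apply_of]
    change a i ^ n • X' j ⊆ X' i
    have hnne0 : n ≠ 0 := by
      rintro rfl
      apply hne1
      simp [H, FreeGroup.freeGroupUnitEquivInt]
    clear hne1
    simp only [X']
    -- Positive and negative powers separately
    cases' (lt_or_gt_of_ne hnne0).symm with hlt hgt
    · have h1n : 1 ≤ n := hlt
      calc
        a i ^ n • X' j ⊆ a i ^ n • (Y i)ᶜ :=
          Set.smul_set_mono ((hXYdisj j i).union_left <| hYdisj hij.symm).subset_compl_right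
        _ ⊆ X i := by
          clear hnne0 hlt
          refine Int.le_induction (motive := fun n _ => a i ^ n • (Y i)ᶜ ⊆ X i) ?_ ?_ n h1n
          · rw [zpow_one]
            exact hX i
          · intro n _hle hi
            calc
              a i ^ (n + 1) • (Y i)ᶜ = (a i ^ n * a i) • (Y i)ᶜ := by rw [zpow_add, zpow_one]
              _ = a i ^ n • a i • (Y i)ᶜ := mul_smul _ _ _
              _ ⊆ a i ^ n • X i := Set.smul_set_mono <| hX i
              _ ⊆ a i ^ n • (Y i)ᶜ := Set.smul_set_mono (hXYdisj i i).subset_compl_right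
              _ ⊆ X i := hi
        _ ⊆ X' i := Set.subset_union_left
    · have h1n : n ≤ -1 := by
        apply Int.le_of_lt_add_one
        simpa using hgt
      calc
        a i ^ n • X' j ⊆ a i ^ n • (X i)ᶜ :=
          Set.smul_set_mono ((hXdisj hij.symm).union_left (hXYdisj i j).symm).subset_compl_right
        _ ⊆ Y i := by
          refine Int.le_induction_down (motive := fun n _ => a i ^ n • (X i)ᶜ ⊆ Y i) ?_ ?_ _ h1n
          · rw [zpow_neg, zpow_one]
            exact hY i
          · intro n _ hi
            calc
              a i ^ (n - 1) • (X i)ᶜ = (a i ^ n * (a i)⁻¹) • (X i)ᶜ := by rw [zpow_sub, zpow_one]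
              _ = a i ^ n • (a i)⁻¹ • (X i)ᶜ := mul_smul _ _ _
              _ ⊆ a i ^ n • Y i := Set.smul_set_mono <| hY i
              _ ⊆ a i ^ n • (X i)ᶜ := Set.smul_set_mono (hXYdisj i i).symm.subset_compl_right
              _ ⊆ Y i := hi
        _ ⊆ X' i := Set.subset_union_right
  show _ ∨ ∃ i, 3 ≤ #(H i)
  inhabit ι
  right
  use Inhabited.default
  simp only [H]
  rw [FreeGroup.freeGroupUnitEquivInt.cardinal_eq, Cardinal.mk_denumerable]
  apply le_of_lt
  exact nat_lt_aleph0 3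


/-- Copy of `FreeGroup.injective_lift_of_ping_pong` with `Nontrivial ι` weakened
to `Nonempty ι`, at the price of providing a base point outside all the sets. -/
theorem freeGroup_lift_injective_of_ping_pong' (p : α)
    (hpX : ∀ i, p ∉ X i) (hpY : ∀ i, p ∉ Y i)
    (hXnonempty : ∀ i, (X i).Nonempty)
    (hXdisj : Pairwise (Function.onFun Disjoint X))
    (hYdisj : Pairwise (Function.onFun Disjoint Y))
    (hXYdisj : ∀ i j, Disjoint (X i) (Y j))
    (hX : ∀ i, a i • (Y i)ᶜ ⊆ X i)
    (hY : ∀ i, a⁻¹ i • (X i)ᶜ ⊆ Y i) :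
    Function.Injective (FreeGroup.lift a) := by
  rcases subsingleton_or_nontrivial ι with hsub | hnt
  swap
  · -- the mathlib proof
    exact freeGroup_lift_injective_of_ping_pong_nontrivial a X Y hXnonempty hXdisj hYdisj
      hXYdisj hX hY
  · -- the subsingleton case
    set i₀ : ι := Classical.arbitrary ι with hi₀
    haveI : Unique ι := ⟨⟨i₀⟩, fun x => Subsingleton.elim x i₀⟩
    rw [injective_iff_map_eq_one]
    intro g hg
    obtain ⟨n, rfl⟩ : ∃ n : ℤ, g = FreeGroup.of i₀ ^ n := by
      set e := FreeGroup.freeGroupCongr (Equiv.ofUnique ι Unit) with he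
      refine ⟨FreeGroup.freeGroupUnitEquivInt (e g), e.injective ?_⟩
      rw [map_zpow]
      have h1 : e (FreeGroup.of i₀) = FreeGroup.of () := by simp [he]
      rw [h1]
      exact (FreeGroup.freeGroupUnitEquivInt.symm_apply_apply (e g)).symm
    by_cases hn : n = 0
    · rw [hn, zpow_zero]
    · exfalso
      rw [map_zpow, FreeGroup.lift_apply_of] at hg
      exact zpow_ne_one_of_ping_pong p (hpX i₀) (hpY i₀) (hXYdisj i₀ i₀)
        (hX i₀) (hY i₀) hn hg

end PingPong




section WordHelpers

open Monoid.CoprodI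

variable {ι : Type*} [DecidableEq ι] {M : ι → Type*} [∀ i, Group (M i)]
  [∀ i, DecidableEq (M i)]

lemma prod_smul_empty (v : Word M) : Word.prod v • Word.empty = v :=
  Word.equiv.apply_symm_apply v

lemma smul_eq_of_prod (x : CoprodI M) {w w' : Word M}
    (h : x * w.prod = w'.prod) : x • w = w' := by
  calc x • w = x • (Word.prod w • Word.empty) := by rw [prod_smul_empty]
    _ = (x * w.prod) • Word.empty := by rw [mul_smul]
    _ = w'.prod • Word.empty := by rw [h]
    _ = w' := prod_smul_empty w'

lemma chain'_replace_head (x y : Σ i, M i) (t : List (Σ i, M i)) (hxy : y.1 = x.1)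
    (h : (x::t).Chain' (fun l l' => l.1 ≠ l'.1)) :
    (y::t).Chain' (fun l l' => l.1 ≠ l'.1) := by
  cases t with
  | nil => exact List.isChain_singleton y
  | cons z u =>
    simp only [List.Chain', List.isChain_cons_cons] at h ⊢
    exact ⟨hxy ▸ h.1, h.2⟩

end WordHelpers

section Free
open Pointwise

open Monoid.CoprodI

universe u v

variable (G₁ : Type u) (G₂ : Type v) [Group G₁] [Group G₂]

/-- The two-element family of groups. -/
def Fb : Bool → Type (max u v)
  | true => ULift G₁
  | false => ULift G₂

instance : ∀ b, Group (Fb G₁ G₂ b)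
  | true => inferInstanceAs (Group (ULift G₁))
  | false => inferInstanceAs (Group (ULift G₂))

noncomputable local instance : ∀ b, DecidableEq (Fb G₁ G₂ b) := fun _ => Classical.decEq _

def upA (a : G₁) : Fb G₁ G₂ true := ULift.up a
def upB (b : G₂) : Fb G₁ G₂ false := ULift.up b

variable {G₁ G₂}

lemma upA_eq_one_iff {a : G₁} : upA G₁ G₂ a = 1 ↔ a = 1 :=
  ⟨fun h => congrArg ULift.down h, fun h => congrArg ULift.up h⟩

lemma upB_eq_one_iff {b : G₂} : upB G₁ G₂ b = 1 ↔ b = 1 :=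
  ⟨fun h => congrArg ULift.down h, fun h => congrArg ULift.up h⟩

lemma upA_inv (a : G₁) : upA G₁ G₂ a⁻¹ = (upA G₁ G₂ a)⁻¹ := rfl
lemma upB_inv (b : G₂) : upB G₁ G₂ b⁻¹ = (upB G₁ G₂ b)⁻¹ := rfl
lemma upA_mul (a a' : G₁) : upA G₁ G₂ (a * a') = upA G₁ G₂ a * upA G₁ G₂ a' := rfl
lemma upB_mul (b b' : G₂) : upB G₁ G₂ (b * b') = upB G₁ G₂ b * upB G₁ G₂ b' := rfl

variable (G₁ G₂)

def oA (a : G₁) : CoprodI (Fb G₁ G₂) := CoprodI.of (upA G₁ G₂ a)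
def oB (b : G₂) : CoprodI (Fb G₁ G₂) := CoprodI.of (upB G₁ G₂ b)

def thetaA : G₁ →* CoprodI (Fb G₁ G₂) :=
  MonoidHom.mk' (oA G₁ G₂) (fun a a' => by rw [oA, upA_mul, map_mul]; rfl)

def thetaB : G₂ →* CoprodI (Fb G₁ G₂) :=
  MonoidHom.mk' (oB G₁ G₂) (fun b b' => by rw [oB, upB_mul, map_mul]; rfl)

noncomputable def Theta : Coprod G₁ G₂ →* CoprodI (Fb G₁ G₂) :=
  Coprod.lift (thetaA G₁ G₂) (thetaB G₁ G₂)

/-- The index type for generators. -/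
abbrev S := {a : G₁ // a ≠ 1} × {b : G₂ // b ≠ 1}

def xg (s : S G₁ G₂) : CoprodI (Fb G₁ G₂) :=
  oA G₁ G₂ s.1.1 * oB G₁ G₂ s.2.1 * (oA G₁ G₂ s.1.1)⁻¹ * (oB G₁ G₂ s.2.1)⁻¹

lemma Theta_E (a : G₁) (b : G₂) :
    Theta G₁ G₂ (E a b) = oA G₁ G₂ a * oB G₁ G₂ b * (oA G₁ G₂ a)⁻¹ * (oB G₁ G₂ b)⁻¹ := by
  simp [E, commutatorElement_def, Theta, thetaA, thetaB, map_mul, map_inv, mul_assoc]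

/-- ping-pong set X -/
def Xs (s : S G₁ G₂) : Set (Word (Fb G₁ G₂)) :=
  {w | ∃ t, w.toList = ⟨true, upA G₁ G₂ s.1.1⟩ :: ⟨false, upB G₁ G₂ s.2.1⟩ :: t}

/-- ping-pong set Y -/
def Ys (s : S G₁ G₂) : Set (Word (Fb G₁ G₂)) :=
  {w | ∃ t, w.toList = ⟨false, upB G₁ G₂ s.2.1⟩ :: ⟨true, upA G₁ G₂ s.1.1⟩ :: t}


variable {G₁ G₂}

lemma mem_Xs {s : S G₁ G₂} {w : Word (Fb G₁ G₂)} 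
    (h : ∃ t, w.toList = ⟨true, upA G₁ G₂ s.1.1⟩ :: ⟨false, upB G₁ G₂ s.2.1⟩ :: t) :
    w ∈ Xs G₁ G₂ s := h

lemma hX_lemma (s : S G₁ G₂) : xg G₁ G₂ s • (Ys G₁ G₂ s)ᶜ ⊆ Xs G₁ G₂ s := by
  obtain ⟨⟨a, ha⟩, ⟨b, hb⟩⟩ := s
  rintro wim ⟨w, hw, rfl⟩
  simp only [Ys, Set.mem_compl_iff, Set.mem_setOf_eq] at hw
  obtain ⟨L, hne, hch⟩ := w
  show xg G₁ G₂ (⟨a, ha⟩, ⟨b, hb⟩) • (⟨L, hne, hch⟩ : Word (Fb G₁ G₂)) ∈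
    Xs G₁ G₂ (⟨a, ha⟩, ⟨b, hb⟩)
  have hA : upA G₁ G₂ a ≠ 1 := fun h => ha (upA_eq_one_iff.mp h)
  have hB : upB G₁ G₂ b ≠ 1 := fun h => hb (upB_eq_one_iff.mp h)
  rcases L with _ | ⟨⟨i, c⟩, t⟩
  · -- empty word
    have : xg G₁ G₂ (⟨a, ha⟩, ⟨b, hb⟩) • (⟨[], hne, hch⟩ : Word (Fb G₁ G₂)) =
        ⟨[⟨true, upA G₁ G₂ a⟩, ⟨false, upB G₁ G₂ b⟩, ⟨true, (upA G₁ G₂ a)⁻¹⟩,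
          ⟨false, (upB G₁ G₂ b)⁻¹⟩],
          by simp [hA, hB], by simp [List.isChain_cons_cons]⟩ := by
      apply smul_eq_of_prod
      simp only [Word.prod, List.map_cons, List.map_nil, List.prod_cons, List.prod_nil, xg,
        oA, oB, map_inv, mul_one]
      group
    rw [this]
    exact ⟨_, rfl⟩
  · rcases i with _ | _
    · -- first letter in G₂
      by_cases hc : c = upB G₁ G₂ b
      · subst hc
        -- first letter is exactly `b`
        rcases t with _ | ⟨⟨j, d⟩, u⟩
        · have : xg G₁ G₂ (⟨a, ha⟩, ⟨b, hb⟩) •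
              (⟨[⟨false, upB G₁ G₂ b⟩], hne, hch⟩ : Word (Fb G₁ G₂)) =
              ⟨[⟨true, upA G₁ G₂ a⟩, ⟨false, upB G₁ G₂ b⟩, ⟨true, (upA G₁ G₂ a)⁻¹⟩],
                by simp [hA, hB], by simp [List.isChain_cons_cons]⟩ := by
            apply smul_eq_of_prod
            simp only [Word.prod, List.map_cons, List.map_nil, List.prod_cons, List.prod_nil,
              xg, oA, oB, map_inv, mul_one]
            group
          rw [this]
          exact ⟨_, rfl⟩
        · rcases j with _ | _
          · -- second letter also in G₂: contradicts chain
            exact absurd rfl (List.isChain_cons_cons.mp hch).1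
          · by_cases hd : d = upA G₁ G₂ a
            · subst hd
              exact absurd ⟨u, rfl⟩ hw
            · have hd1 : (upA G₁ G₂ a)⁻¹ * d ≠ 1 := fun h => hd (by
                rw [inv_mul_eq_one] at h; exact h.symm)
              have : xg G₁ G₂ (⟨a, ha⟩, ⟨b, hb⟩) •
                  (⟨⟨false, upB G₁ G₂ b⟩ :: ⟨true, d⟩ :: u, hne, hch⟩ : Word (Fb G₁ G₂)) =
                  ⟨⟨true, upA G₁ G₂ a⟩ :: ⟨false, upB G₁ G₂ b⟩ ::
                      ⟨true, (upA G₁ G₂ a)⁻¹ * d⟩ :: u,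
                    by
                      intro l hl
                      simp only [List.mem_cons] at hl
                      rcases hl with h | h | h | h
                      · subst h; exact hA
                      · subst h; exact hB
                      · subst h; exact hd1
                      · exact hne l (by simp [h]),
                    by
                      have hchu := (List.isChain_cons_cons.mp hch).2
                      exact List.isChain_cons_cons.mpr ⟨by simp, List.isChain_cons_cons.mpr
                        ⟨by simp, chain'_replace_head ⟨true, d⟩ _ u rfl hchu⟩⟩⟩ := by
                apply smul_eq_of_prod
                simp only [Word.prod, List.map_cons, List.prod_cons, xg, oA, oB, map_inv,
                  map_mul]
                group
              rw [this]
              exact ⟨_, rfl⟩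
      · -- first letter in G₂ but not `b`
        have hc1 : (upB G₁ G₂ b)⁻¹ * c ≠ 1 := fun h => hc (by
          rw [inv_mul_eq_one] at h; exact h.symm)
        have : xg G₁ G₂ (⟨a, ha⟩, ⟨b, hb⟩) •
            (⟨⟨false, c⟩ :: t, hne, hch⟩ : Word (Fb G₁ G₂)) =
            ⟨⟨true, upA G₁ G₂ a⟩ :: ⟨false, upB G₁ G₂ b⟩ :: ⟨true, (upA G₁ G₂ a)⁻¹⟩ ::
                ⟨false, (upB G₁ G₂ b)⁻¹ * c⟩ :: t,
              by
                intro l hl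
                simp only [List.mem_cons] at hl
                rcases hl with h | h | h | h | h
                · subst h; exact hA
                · subst h; exact hB
                · subst h; exact inv_ne_one.mpr hA
                · subst h; exact hc1
                · exact hne l (by simp [h]),
              by
                refine List.isChain_cons_cons.mpr ⟨by simp, List.isChain_cons_cons.mpr ⟨by simp,
                  List.isChain_cons_cons.mpr ⟨by simp, chain'_replace_head ⟨false, c⟩ _ t rfl hch⟩⟩⟩⟩ := by
          apply smul_eq_of_prod
          simp only [Word.prod, List.map_cons, List.prod_cons, xg, oA, oB, map_inv, map_mul]
          group
        rw [this]
        exact ⟨_, rfl⟩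
    · -- first letter in G₁
      have : xg G₁ G₂ (⟨a, ha⟩, ⟨b, hb⟩) •
          (⟨⟨true, c⟩ :: t, hne, hch⟩ : Word (Fb G₁ G₂)) =
          ⟨⟨true, upA G₁ G₂ a⟩ :: ⟨false, upB G₁ G₂ b⟩ :: ⟨true, (upA G₁ G₂ a)⁻¹⟩ ::
              ⟨false, (upB G₁ G₂ b)⁻¹⟩ :: ⟨true, c⟩ :: t,
            by
              intro l hl
              simp only [List.mem_cons] at hl
              rcases hl with h | h | h | h | h
              · subst h; exact hA
              · subst h; exact hB
              · subst h; exact inv_ne_one.mpr hA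
              · subst h; exact inv_ne_one.mpr hB
              · exact hne l (by simp [h]),
            by
              refine List.isChain_cons_cons.mpr ⟨by simp, List.isChain_cons_cons.mpr ⟨by simp,
                List.isChain_cons_cons.mpr ⟨by simp, List.isChain_cons_cons.mpr ⟨by simp, hch⟩⟩⟩⟩⟩ := by
        apply smul_eq_of_prod
        simp only [Word.prod, List.map_cons, List.prod_cons, xg, oA, oB, map_inv, map_mul]
        group
      rw [this]
      exact ⟨_, rfl⟩


lemma hY_lemma (s : S G₁ G₂) : (xg G₁ G₂ s)⁻¹ • (Xs G₁ G₂ s)ᶜ ⊆ Ys G₁ G₂ s := by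
  obtain ⟨⟨a, ha⟩, ⟨b, hb⟩⟩ := s
  rintro wim ⟨w, hw, rfl⟩
  simp only [Xs, Set.mem_compl_iff, Set.mem_setOf_eq] at hw
  obtain ⟨L, hne, hch⟩ := w
  show (xg G₁ G₂ (⟨a, ha⟩, ⟨b, hb⟩))⁻¹ • (⟨L, hne, hch⟩ : Word (Fb G₁ G₂)) ∈
    Ys G₁ G₂ (⟨a, ha⟩, ⟨b, hb⟩)
  have hA : upA G₁ G₂ a ≠ 1 := fun h => ha (upA_eq_one_iff.mp h)
  have hB : upB G₁ G₂ b ≠ 1 := fun h => hb (upB_eq_one_iff.mp h)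
  rcases L with _ | ⟨⟨i, c⟩, t⟩
  · -- empty word
    have : (xg G₁ G₂ (⟨a, ha⟩, ⟨b, hb⟩))⁻¹ • (⟨[], hne, hch⟩ : Word (Fb G₁ G₂)) =
        ⟨[⟨false, upB G₁ G₂ b⟩, ⟨true, upA G₁ G₂ a⟩, ⟨false, (upB G₁ G₂ b)⁻¹⟩,
          ⟨true, (upA G₁ G₂ a)⁻¹⟩],
          by
            intro l hl
            simp only [List.mem_cons] at hl
            rcases hl with h | h | h | h | h
            · subst h; exact hB
            · subst h; exact hA
            · subst h; exact inv_ne_one.mpr hB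
            · subst h; exact inv_ne_one.mpr hA
            · simp at h,
          by simp [List.isChain_cons_cons]⟩ := by
      apply smul_eq_of_prod
      simp only [Word.prod, List.map_cons, List.map_nil, List.prod_cons, List.prod_nil, xg,
        oA, oB, map_inv, mul_one]
      group
    rw [this]
    exact ⟨_, rfl⟩
  · rcases i with _ | _
    · -- first letter in G₂
      have : (xg G₁ G₂ (⟨a, ha⟩, ⟨b, hb⟩))⁻¹ •
          (⟨⟨false, c⟩ :: t, hne, hch⟩ : Word (Fb G₁ G₂)) =
          ⟨⟨false, upB G₁ G₂ b⟩ :: ⟨true, upA G₁ G₂ a⟩ :: ⟨false, (upB G₁ G₂ b)⁻¹⟩ ::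
              ⟨true, (upA G₁ G₂ a)⁻¹⟩ :: ⟨false, c⟩ :: t,
            by
              intro l hl
              simp only [List.mem_cons] at hl
              rcases hl with h | h | h | h | h
              · subst h; exact hB
              · subst h; exact hA
              · subst h; exact inv_ne_one.mpr hB
              · subst h; exact inv_ne_one.mpr hA
              · exact hne l (by simp [h]),
            by
              refine List.isChain_cons_cons.mpr ⟨by simp, List.isChain_cons_cons.mpr ⟨by simp,
                List.isChain_cons_cons.mpr ⟨by simp, List.isChain_cons_cons.mpr ⟨by simp, hch⟩⟩⟩⟩⟩ := by
        apply smul_eq_of_prod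
        simp only [Word.prod, List.map_cons, List.prod_cons, xg, oA, oB, map_inv, map_mul]
        group
      rw [this]
      exact ⟨_, rfl⟩
    · -- first letter in G₁
      by_cases hc : c = upA G₁ G₂ a
      · subst hc
        rcases t with _ | ⟨⟨j, d⟩, u⟩
        · have : (xg G₁ G₂ (⟨a, ha⟩, ⟨b, hb⟩))⁻¹ •
              (⟨[⟨true, upA G₁ G₂ a⟩], hne, hch⟩ : Word (Fb G₁ G₂)) =
              ⟨[⟨false, upB G₁ G₂ b⟩, ⟨true, upA G₁ G₂ a⟩, ⟨false, (upB G₁ G₂ b)⁻¹⟩],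
                by
                  intro l hl
                  simp only [List.mem_cons] at hl
                  rcases hl with h | h | h | h
                  · subst h; exact hB
                  · subst h; exact hA
                  · subst h; exact inv_ne_one.mpr hB
                  · simp at h,
                by simp [List.isChain_cons_cons]⟩ := by
            apply smul_eq_of_prod
            simp only [Word.prod, List.map_cons, List.map_nil, List.prod_cons, List.prod_nil,
              xg, oA, oB, map_inv, mul_one]
            group
          rw [this]
          exact ⟨_, rfl⟩
        · rcases j with _ | _
          · by_cases hd : d = upB G₁ G₂ b
            · subst hd
              exact absurd ⟨u, rfl⟩ hw
            · have hd1 : (upB G₁ G₂ b)⁻¹ * d ≠ 1 := fun h => hd (by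
                rw [inv_mul_eq_one] at h; exact h.symm)
              have : (xg G₁ G₂ (⟨a, ha⟩, ⟨b, hb⟩))⁻¹ •
                  (⟨⟨true, upA G₁ G₂ a⟩ :: ⟨false, d⟩ :: u, hne, hch⟩ : Word (Fb G₁ G₂)) =
                  ⟨⟨false, upB G₁ G₂ b⟩ :: ⟨true, upA G₁ G₂ a⟩ ::
                      ⟨false, (upB G₁ G₂ b)⁻¹ * d⟩ :: u,
                    by
                      intro l hl
                      simp only [List.mem_cons] at hl
                      rcases hl with h | h | h | h
                      · subst h; exact hB
                      · subst h; exact hA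
                      · subst h; exact hd1
                      · exact hne l (by simp [h]),
                    by
                      have hchu := (List.isChain_cons_cons.mp hch).2
                      exact List.isChain_cons_cons.mpr ⟨by simp, List.isChain_cons_cons.mpr
                        ⟨by simp, chain'_replace_head ⟨false, d⟩ _ u rfl hchu⟩⟩⟩ := by
                apply smul_eq_of_prod
                simp only [Word.prod, List.map_cons, List.prod_cons, xg, oA, oB, map_inv,
                  map_mul]
                group
              rw [this]
              exact ⟨_, rfl⟩
          · -- second letter also in G₁: contradicts chain
            exact absurd rfl (List.isChain_cons_cons.mp hch).1
      · -- first letter in G₁ but not `a`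
        have hc1 : (upA G₁ G₂ a)⁻¹ * c ≠ 1 := fun h => hc (by
          rw [inv_mul_eq_one] at h; exact h.symm)
        have : (xg G₁ G₂ (⟨a, ha⟩, ⟨b, hb⟩))⁻¹ •
            (⟨⟨true, c⟩ :: t, hne, hch⟩ : Word (Fb G₁ G₂)) =
            ⟨⟨false, upB G₁ G₂ b⟩ :: ⟨true, upA G₁ G₂ a⟩ :: ⟨false, (upB G₁ G₂ b)⁻¹⟩ ::
                ⟨true, (upA G₁ G₂ a)⁻¹ * c⟩ :: t,
              by
                intro l hl
                simp only [List.mem_cons] at hl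
                rcases hl with h | h | h | h | h
                · subst h; exact hB
                · subst h; exact hA
                · subst h; exact inv_ne_one.mpr hB
                · subst h; exact hc1
                · exact hne l (by simp [h]),
              by
                refine List.isChain_cons_cons.mpr ⟨by simp, List.isChain_cons_cons.mpr ⟨by simp,
                  List.isChain_cons_cons.mpr ⟨by simp, chain'_replace_head ⟨true, c⟩ _ t rfl hch⟩⟩⟩⟩ := by
          apply smul_eq_of_prod
          simp only [Word.prod, List.map_cons, List.prod_cons, xg, oA, oB, map_inv, map_mul]
          group
        rw [this]
        exact ⟨_, rfl⟩


lemma upA_sig_inj {x y : G₁} 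
    (h : (⟨true, upA G₁ G₂ x⟩ : Σ i, Fb G₁ G₂ i) = ⟨true, upA G₁ G₂ y⟩) : x = y := by
  injection h with h1 h2
  exact congrArg ULift.down h2

lemma upB_sig_inj {x y : G₂} 
    (h : (⟨false, upB G₁ G₂ x⟩ : Σ i, Fb G₁ G₂ i) = ⟨false, upB G₁ G₂ y⟩) : x = y := by
  injection h with h1 h2
  exact congrArg ULift.down h2

lemma Xs_disj : Pairwise (Function.onFun Disjoint (Xs G₁ G₂)) := by
  intro s t hst
  rw [Function.onFun_apply, Set.disjoint_left]
  rintro w ⟨l1, h1⟩ ⟨l2, h2⟩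
  rw [h1] at h2
  apply hst
  injection h2 with ha hrest
  injection hrest with hb _
  exact Prod.ext (Subtype.ext (upA_sig_inj ha)) (Subtype.ext (upB_sig_inj hb))

lemma Ys_disj : Pairwise (Function.onFun Disjoint (Ys G₁ G₂)) := by
  intro s t hst
  rw [Function.onFun_apply, Set.disjoint_left]
  rintro w ⟨l1, h1⟩ ⟨l2, h2⟩
  rw [h1] at h2
  apply hst
  injection h2 with hb hrest
  injection hrest with ha _
  exact Prod.ext (Subtype.ext (upA_sig_inj ha)) (Subtype.ext (upB_sig_inj hb))

lemma XY_disj (s t : S G₁ G₂) : Disjoint (Xs G₁ G₂ s) (Ys G₁ G₂ t) := by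
  rw [Set.disjoint_left]
  rintro w ⟨l1, h1⟩ ⟨l2, h2⟩
  rw [h1] at h2
  injection h2 with ha _
  injection ha with hbool _
  exact Bool.noConfusion hbool

lemma Xs_nonempty (s : S G₁ G₂) : (Xs G₁ G₂ s).Nonempty := by
  obtain ⟨⟨a, ha⟩, ⟨b, hb⟩⟩ := s
  have hA : upA G₁ G₂ a ≠ 1 := fun h => ha (upA_eq_one_iff.mp h)
  have hB : upB G₁ G₂ b ≠ 1 := fun h => hb (upB_eq_one_iff.mp h)
  exact ⟨⟨[⟨true, upA G₁ G₂ a⟩, ⟨false, upB G₁ G₂ b⟩],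
    by
      intro l hl
      simp only [List.mem_cons] at hl
      rcases hl with h | h | h
      · subst h; exact hA
      · subst h; exact hB
      · simp at h,
    by simp [List.isChain_cons_cons]⟩, ⟨[], rfl⟩⟩

lemma empty_notin_Xs (s : S G₁ G₂) : Word.empty ∉ Xs G₁ G₂ s := by
  rintro ⟨t, h⟩
  simp [Word.empty] at h

lemma empty_notin_Ys (s : S G₁ G₂) : Word.empty ∉ Ys G₁ G₂ s := by
  rintro ⟨t, h⟩
  simp [Word.empty] at h

instance [Nontrivial G₁] [Nontrivial G₂] : Nonempty (S G₁ G₂) := by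
  obtain ⟨a, ha⟩ := exists_ne (1 : G₁)
  obtain ⟨b, hb⟩ := exists_ne (1 : G₂)
  exact ⟨⟨a, ha⟩, ⟨b, hb⟩⟩

lemma xg_lift_injective [Nontrivial G₁] [Nontrivial G₂] :
    Function.Injective (FreeGroup.lift (xg G₁ G₂) : FreeGroup (S G₁ G₂) →* CoprodI (Fb G₁ G₂)) := by
  apply freeGroup_lift_injective_of_ping_pong' (xg G₁ G₂) (Xs G₁ G₂) (Ys G₁ G₂) Word.empty
    empty_notin_Xs empty_notin_Ys Xs_nonempty Xs_disj Ys_disj XY_disj hX_lemma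
  intro s
  exact hY_lemma s

lemma theta_comp :
    (Theta G₁ G₂).comp (FreeGroup.lift (fun s : S G₁ G₂ => E s.1.1 s.2.1)) =
      FreeGroup.lift (xg G₁ G₂) := by
  ext s
  simp only [MonoidHom.comp_apply, FreeGroup.lift_apply_of, Theta_E]
  rfl

lemma E_lift_injective [Nontrivial G₁] [Nontrivial G₂] :
    Function.Injective
      (FreeGroup.lift (fun s : S G₁ G₂ => E s.1.1 s.2.1) : FreeGroup (S G₁ G₂) →* Coprod G₁ G₂) := by
  intro x y h
  apply xg_lift_injective (G₁ := G₁) (G₂ := G₂)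
  rw [← theta_comp]
  simp only [MonoidHom.comp_apply, h]

lemma E_lift_range :
    (FreeGroup.lift (fun s : S G₁ G₂ => E s.1.1 s.2.1) : FreeGroup (S G₁ G₂) →* Coprod G₁ G₂).range
      = Subgroup.closure (genSet G₁ G₂) := by
  rw [FreeGroup.range_lift_eq_closure]
  congr 1
  ext x
  constructor
  · rintro ⟨s, rfl⟩
    exact ⟨s.1.1, s.2.1, s.1.2, s.2.2, rfl⟩
  · rintro ⟨a, b, ha, hb, rfl⟩
    exact ⟨(⟨a, ha⟩, ⟨b, hb⟩), rfl⟩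

lemma card_S [Finite G₁] [Finite G₂] :
    Nat.card (S G₁ G₂) = (Nat.card G₁ - 1) * (Nat.card G₂ - 1) := by
  classical
  haveI := Fintype.ofFinite G₁
  haveI := Fintype.ofFinite G₂
  have h1 : Nat.card {a : G₁ // a ≠ 1} = Nat.card G₁ - 1 := by
    simp [Nat.card_eq_fintype_card, Fintype.card_subtype_compl, Fintype.card_subtype_eq]
  have h2 : Nat.card {b : G₂ // b ≠ 1} = Nat.card G₂ - 1 := by
    simp [Nat.card_eq_fintype_card, Fintype.card_subtype_compl, Fintype.card_subtype_eq]
  rw [S, Nat.card_prod, h1, h2]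

noncomputable def kernelEquivFree [Finite G₁] [Finite G₂] [Nontrivial G₁] [Nontrivial G₂] :
    (Coprod.toProd : Coprod G₁ G₂ →* G₁ × G₂).ker ≃*
      FreeGroup (Fin ((Nat.card G₁ - 1) * (Nat.card G₂ - 1))) := by
  have hrange : (FreeGroup.lift (fun s : S G₁ G₂ => E s.1.1 s.2.1) :
      FreeGroup (S G₁ G₂) →* Coprod G₁ G₂).range = (Coprod.toProd : Coprod G₁ G₂ →* G₁ × G₂).ker := by
    rw [E_lift_range, ker_toProd_eq]
  have eS : S G₁ G₂ ≃ Fin ((Nat.card G₁ - 1) * (Nat.card G₂ - 1)) :=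
    (Finite.equivFin _).trans (finCongr card_S)
  exact ((MulEquiv.subgroupCongr hrange.symm).trans
    (MonoidHom.ofInjective E_lift_injective).symm).trans (FreeGroup.freeGroupCongr eS)

end Free


end KCPaux
end

/-- (Serre, Trees, I.1 Prop. 4 = Lemma 6.6 of the paper.)
For nontrivial finite groups `G₁, G₂`, the kernel of the canonical homomorphism
`G₁ * G₂ → G₁ × G₂` from the free product to the direct product is generated by the
commutators `[g₁, g₂]` with `g₁ ≠ 1`, `g₂ ≠ 1`, it is free of rank `(|G₁|−1)(|G₂|−1)`,
and the canonical homomorphism is surjective (so we get an exact sequence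
`1 → [G₁,G₂] → G₁ * G₂ → G₁ × G₂ → 1`). -/
theorem kernel_coprod_to_prod_free (G₁ G₂ : Type*) [Group G₁] [Group G₂]
    [Finite G₁] [Finite G₂] [Nontrivial G₁] [Nontrivial G₂] :
    Function.Surjective (Monoid.Coprod.toProd : Monoid.Coprod G₁ G₂ →* G₁ × G₂) ∧
    (Monoid.Coprod.toProd : Monoid.Coprod G₁ G₂ →* G₁ × G₂).ker =
      Subgroup.closure
        {x : Monoid.Coprod G₁ G₂ | ∃ g₁ : G₁, ∃ g₂ : G₂, g₁ ≠ 1 ∧ g₂ ≠ 1 ∧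
          x = ⁅(Monoid.Coprod.inl g₁ : Monoid.Coprod G₁ G₂), Monoid.Coprod.inr g₂⁆} ∧
    Nonempty ((Monoid.Coprod.toProd : Monoid.Coprod G₁ G₂ →* G₁ × G₂).ker ≃*
      FreeGroup (Fin ((Nat.card G₁ - 1) * (Nat.card G₂ - 1)))) := by
  exact ⟨Monoid.Coprod.toProd_surjective, KCPaux.ker_toProd_eq, ⟨KCPaux.kernelEquivFree⟩⟩
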